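/- Convergence criterion for the flavour expansion of one-loop integrals. Let ι be a finite type, let D : ι → ℝ take positive values, let Â be an ι×ι complex Hermitian matrix with zero diagonal, let p ≥ 2 and b₁,…,b_p be positive reals, and define the real symmetric mass-insertion matrix Q by Q_{IJ} = |Â_{IJ}| / √(D_I · D_J). If every eigenvalue λ of Q satisfies |λ| < 1, then for all indices I, J the flavour expansion series is absolutely convergent: the sequence M ↦ ∑_{K₁,…,K_{M−1} ∈ ι} J_{M+1+p}(D_I, D_J, D_{K₁},…,D_{K_{M−1}}, b₁,…,b_p) · |Â_{IK₁}| ⋯ |Â_{K_{M−1}J}| (indexed by M ≥ 1) is summable. -/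

import Mathlib

open Matrix

/-- The zero-momentum master one-loop integral
`Jₙ(a₁,…,a_n) = ∫₀^∞ u / ∏_{j=1}^n (u + a_j) du`. -/
noncomputable def Jint {n : ℕ} (a : Fin n → ℝ) : ℝ :=
  ∫ u in Set.Ioi (0 : ℝ), u / ∏ j, (u + a j)

/-- The product of matrix entries of `B` along the chain
`I → K 0 → K 1 → ⋯ → K (m-1) → J` (for `m = 0` it is just `B I J`). -/
def pathProd {R : Type*} [CommMonoid R] {ι : Type*} (B : Matrix ι ι R) (I J : ι)
    {m : ℕ} (K : Fin m → ι) : R :=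
  let nodes : Fin (m + 2) → ι := Fin.cons I (Fin.snoc K J)
  ∏ i : Fin (m + 1), B (nodes i.castSucc) (nodes i.succ)

/-! ### Auxiliary lemmas about `pathProd` -/

lemma pathProd_eq {R : Type*} [CommMonoid R] {ι : Type*} (B : Matrix ι ι R) (I J : ι)
    {m : ℕ} (K : Fin m → ι) :
    pathProd B I J K
      = ∏ i : Fin (m+1), B ((Fin.cons I K : Fin (m+1) → ι) i)
          ((Fin.snoc K J : Fin (m+1) → ι) i) := by
  unfold pathProd
  refine Finset.prod_congr rfl fun i _ => ?_
  rw [Fin.cons_succ]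
  congr 1
  rw [Fin.cons_snoc_eq_snoc_cons, Fin.snoc_castSucc]

lemma pathProd_cons {R : Type*} [CommMonoid R] {ι : Type*} (B : Matrix ι ι R) (I J : ι)
    {m : ℕ} (k : ι) (K : Fin m → ι) :
    pathProd B I J (Fin.cons k K) = B I k * pathProd B k J K := by
  rw [pathProd_eq, pathProd_eq, Fin.prod_univ_succ]
  congr 1
  · rw [← Fin.cons_snoc_eq_snoc_cons]
    simp

lemma sum_pathProd {R : Type*} [CommSemiring R] {ι : Type*} [Fintype ι] [DecidableEq ι]
    (B : Matrix ι ι R) : ∀ (m : ℕ) (I J : ι),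
    ∑ K : Fin m → ι, pathProd B I J K = (B ^ (m+1)) I J := by
  intro m
  induction m with
  | zero =>
    intro I J
    rw [Fintype.sum_unique, pow_one, pathProd_eq, Fin.prod_univ_succ]
    rw [show ((0 : Fin 1) = Fin.last 0) from rfl, Fin.snoc_last]
    simp
  | succ m ih =>
    intro I J
    have h : ∑ K : Fin (m+1) → ι, pathProd B I J K
        = ∑ k : ι, ∑ K : Fin m → ι, pathProd B I J (Fin.cons k K) := by
      rw [← (Fin.consEquiv (fun _ : Fin (m+1) => ι)).sum_comp (pathProd B I J),
        Fintype.sum_prod_type]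
      rfl
    rw [h, pow_succ', Matrix.mul_apply]
    refine Finset.sum_congr rfl fun k _ => ?_
    simp only [pathProd_cons, ← Finset.mul_sum, ih k J]

lemma pathProd_nonneg {ι : Type*} (B : Matrix ι ι ℝ) (hB : ∀ i j, 0 ≤ B i j) (I J : ι)
    {m : ℕ} (K : Fin m → ι) : 0 ≤ pathProd B I J K :=
  Finset.prod_nonneg fun _ _ => hB _ _

lemma pathProd_scale {ι : Type*} (B : Matrix ι ι ℝ) (g : ι → ℝ) (I J : ι)
    {m : ℕ} (K : Fin m → ι) :
    pathProd (Matrix.of fun i j => g i * B i j * g j) I J K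
      = (g I * g J * ∏ i, (g (K i) * g (K i))) * pathProd B I J K := by
  rw [pathProd_eq, pathProd_eq]
  simp only [Matrix.of_apply]
  rw [Finset.prod_mul_distrib, Finset.prod_mul_distrib]
  have h1 : ∏ i : Fin (m+1), g ((Fin.cons I K : Fin (m+1) → ι) i)
      = g I * ∏ i, g (K i) := by
    rw [Fin.prod_univ_succ]
    simp
  have h2 : ∏ i : Fin (m+1), g ((Fin.snoc K J : Fin (m+1) → ι) i)
      = (∏ i, g (K i)) * g J := by
    rw [Fin.prod_univ_castSucc]
    simp
  rw [h1, h2, Finset.prod_mul_distrib]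
  ring

/-! ### Auxiliary integrability lemmas -/

open MeasureTheory in
lemma integrableOn_aux (c : ℝ) (hc : 0 < c) :
    IntegrableOn (fun u : ℝ => ((u + c) ^ 3)⁻¹) (Set.Ioi (0:ℝ)) := by
  have hmeas : MeasureTheory.AEStronglyMeasurable (fun u : ℝ => ((u + c) ^ 3)⁻¹) volume :=
    (((measurable_id.add_const c).pow_const 3).inv).aestronglyMeasurable
  have h1 : IntegrableOn (fun u : ℝ => ((u + c) ^ 3)⁻¹) (Set.Ioc (0:ℝ) c) := by
    refine Integrable.mono' (g := fun _ : ℝ => (c ^ 3)⁻¹)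
      (integrableOn_const measure_Ioc_lt_top.ne) hmeas.restrict ?_
    rw [ae_restrict_iff' measurableSet_Ioc]
    filter_upwards with u hu
    have h0 : 0 < u := hu.1
    have : c ^ 3 ≤ (u + c) ^ 3 := by gcongr <;> linarith
    rw [Real.norm_eq_abs, abs_of_nonneg (by positivity)]
    exact inv_anti₀ (by positivity) this
  have h2 : IntegrableOn (fun u : ℝ => ((u + c) ^ 3)⁻¹) (Set.Ioi c) := by
    refine Integrable.mono' (g := fun u : ℝ => u ^ (-3 : ℝ))
      (integrableOn_Ioi_rpow_of_lt (by norm_num) hc) hmeas.restrict ?_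
    rw [ae_restrict_iff' measurableSet_Ioi]
    filter_upwards with u hu
    have h0 : 0 < u := hc.trans hu
    have he : u ^ (-3 : ℝ) = (u ^ 3)⁻¹ := by
      rw [Real.rpow_neg h0.le, show (3:ℝ) = ((3:ℕ):ℝ) by norm_num, Real.rpow_natCast]
    rw [Real.norm_eq_abs, abs_of_nonneg (by positivity), he]
    have : u ^ 3 ≤ (u + c) ^ 3 := by gcongr <;> linarith
    exact inv_anti₀ (by positivity) this
  rw [← Set.Ioc_union_Ioi_eq_Ioi hc.le]
  exact h1.union h2

open MeasureTheory in
lemma integrableOn_g0 (x y : ℝ) (hx : 0 < x) (hy : 0 < y) {p : ℕ} (hp : 2 ≤ p)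
    (b : Fin p → ℝ) (hb : ∀ j, 0 < b j) :
    IntegrableOn (fun u : ℝ => u / ((u + x) * ((u + y) * ∏ j, (u + b j))))
      (Set.Ioi (0:ℝ)) := by
  haveI : Nonempty (Fin p) := ⟨⟨0, by omega⟩⟩
  obtain ⟨q, hq⟩ : ∃ q, p = q + 2 := ⟨p - 2, by omega⟩
  set cb := Finset.univ.inf' Finset.univ_nonempty b with hcb
  have hcbpos : 0 < cb := by
    obtain ⟨j, -, hj⟩ := Finset.exists_mem_eq_inf' Finset.univ_nonempty b
    rw [hcb, hj]; exact hb j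
  set c := min x (min y cb) with hcdef
  have hc : 0 < c := lt_min hx (lt_min hy hcbpos)
  have hcx : c ≤ x := min_le_left _ _
  have hcy : c ≤ y := le_trans (min_le_right _ _) (min_le_left _ _)
  have hcbj : ∀ j, c ≤ b j := fun j =>
    le_trans (min_le_right _ _) (le_trans (min_le_right _ _) (Finset.inf'_le _ (Finset.mem_univ j)))
  have hmeas : MeasureTheory.AEStronglyMeasurable
      (fun u : ℝ => u / ((u + x) * ((u + y) * ∏ j, (u + b j)))) volume := by
    refine Measurable.aestronglyMeasurable (measurable_id.div ?_)
    exact (measurable_id.add_const x).mul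
      ((measurable_id.add_const y).mul
        (Finset.univ.measurable_prod fun j _ => measurable_id.add_const (b j)))
  refine Integrable.mono' (g := fun u : ℝ => (c ^ q)⁻¹ * ((u + c) ^ 3)⁻¹)
    ((integrableOn_aux c hc).const_mul _) hmeas.restrict ?_
  rw [ae_restrict_iff' measurableSet_Ioi]
  filter_upwards with u hu
  have h0 : (0:ℝ) < u := hu
  have hden : (0:ℝ) < (u + x) * ((u + y) * ∏ j, (u + b j)) := by
    have : 0 < ∏ j, (u + b j) := Finset.prod_pos fun j _ => by linarith [hb j]
    have h1 : 0 < u + x := by linarith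
    have h2 : 0 < u + y := by linarith
    positivity
  rw [Real.norm_eq_abs, abs_of_nonneg (le_of_lt (div_pos h0 hden))]
  have step1 : u / ((u + x) * ((u + y) * ∏ j, (u + b j))) ≤ u / (u + c) ^ (p + 2) := by
    have hprod : (u + c) ^ p ≤ ∏ j, (u + b j) := by
      calc (u + c) ^ p = ∏ _j : Fin p, (u + c) := by
            rw [Finset.prod_const, Finset.card_univ, Fintype.card_fin]
        _ ≤ ∏ j, (u + b j) :=
            Finset.prod_le_prod (fun j _ => by linarith) (fun j _ => by linarith [hcbj j])
    have hpow : (u + c) ^ (p + 2) ≤ (u + x) * ((u + y) * ∏ j, (u + b j)) := by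
      calc (u + c) ^ (p + 2) = (u + c) * ((u + c) * (u + c) ^ p) := by ring
        _ ≤ (u + x) * ((u + y) * ∏ j, (u + b j)) := by
            have h1 : (0:ℝ) < u + c := by linarith
            gcongr <;> linarith
    exact div_le_div_of_nonneg_left h0.le (by positivity) hpow
  have step2 : u / (u + c) ^ (p + 2) ≤ (c ^ q)⁻¹ * ((u + c) ^ 3)⁻¹ := by
    have key2 : u * (c ^ q * (u + c) ^ 3) ≤ (u + c) ^ (p + 2) := by
      have e : (u + c) ^ (p + 2) = (u + c) ^ q * ((u + c) ^ 3 * (u + c)) := by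
        rw [hq]; ring
      rw [e]
      calc u * (c ^ q * (u + c) ^ 3) = c ^ q * ((u + c) ^ 3 * u) := by ring
        _ ≤ (u + c) ^ q * ((u + c) ^ 3 * (u + c)) := by gcongr <;> linarith
    rw [div_le_iff₀ (by positivity)]
    calc u = u * (c ^ q * (u + c) ^ 3) * (c ^ q * (u + c) ^ 3)⁻¹ := by
          field_simp
      _ ≤ (u + c) ^ (p + 2) * (c ^ q * (u + c) ^ 3)⁻¹ := by gcongr
      _ = (c ^ q)⁻¹ * ((u + c) ^ 3)⁻¹ * (u + c) ^ (p + 2) := by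
          rw [mul_inv]; ring
  linarith

/-! ### Auxiliary lemmas about `Jint` -/

lemma prod_split (x y u : ℝ) {p m : ℕ} (b : Fin p → ℝ) (d : Fin m → ℝ) :
    ∏ j, (u + Fin.append (Fin.cons x (Fin.cons y d)) b j)
      = ((u + x) * ((u + y) * ∏ j, (u + b j))) * ∏ i, (u + d i) := by
  rw [Fin.prod_univ_add]
  simp only [Fin.append_left, Fin.append_right]
  rw [Fin.prod_univ_succ, Fin.prod_univ_succ]
  simp only [Fin.cons_zero, Fin.cons_succ]
  ring

lemma Jint_nonneg {n : ℕ} (a : Fin n → ℝ) (ha : ∀ j, 0 < a j) : 0 ≤ Jint a := by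
  refine MeasureTheory.setIntegral_nonneg measurableSet_Ioi fun u hu => ?_
  have h0 : (0:ℝ) < u := hu
  exact div_nonneg h0.le (Finset.prod_nonneg fun j _ => by linarith [ha j])

open MeasureTheory in
lemma Jint_le (x y : ℝ) (hx : 0 < x) (hy : 0 < y) {p : ℕ} (hp : 2 ≤ p)
    (b : Fin p → ℝ) (hb : ∀ j, 0 < b j) {m : ℕ} (d : Fin m → ℝ) (hd : ∀ i, 0 < d i) :
    Jint (Fin.append (Fin.cons x (Fin.cons y d)) b)
      ≤ (∏ i, (d i)⁻¹) *
        ∫ u in Set.Ioi (0:ℝ), u / ((u + x) * ((u + y) * ∏ j, (u + b j))) := by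
  rw [← MeasureTheory.integral_const_mul]
  refine MeasureTheory.integral_mono_of_nonneg ?_
    (((integrableOn_g0 x y hx hy hp b hb)).const_mul _) ?_
  · filter_upwards [ae_restrict_mem measurableSet_Ioi] with u hu
    have h0 : (0:ℝ) < u := hu
    refine div_nonneg h0.le ?_
    rw [prod_split]
    have h1 : (0:ℝ) < ∏ j, (u + b j) := Finset.prod_pos fun j _ => by linarith [hb j]
    have h2 : (0:ℝ) < ∏ i, (u + d i) := Finset.prod_pos fun i _ => by linarith [hd i]
    have h3 : (0:ℝ) < u + x := by linarith
    have h4 : (0:ℝ) < u + y := by linarith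
    positivity
  · filter_upwards [ae_restrict_mem measurableSet_Ioi] with u hu
    have h0 : (0:ℝ) < u := hu
    have h1 : (0:ℝ) < ∏ j, (u + b j) := Finset.prod_pos fun j _ => by linarith [hb j]
    have h3 : (0:ℝ) < u + x := by linarith
    have h4 : (0:ℝ) < u + y := by linarith
    have hdd : (0:ℝ) < ∏ i, d i := Finset.prod_pos fun i _ => hd i
    have hud : ∏ i, d i ≤ ∏ i, (u + d i) :=
      Finset.prod_le_prod (fun i _ => (hd i).le) (fun i _ => by linarith)
    set A := (u + x) * ((u + y) * ∏ j, (u + b j)) with hA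
    have hApos : 0 < A := by positivity
    calc u / ∏ j, (u + Fin.append (Fin.cons x (Fin.cons y d)) b j)
        = u / (A * ∏ i, (u + d i)) := by rw [prod_split]
      _ ≤ u / (A * ∏ i, d i) := by gcongr
      _ = (∏ i, (d i)⁻¹) * (u / A) := by
          rw [Finset.prod_inv_distrib, mul_comm ((∏ i, d i)⁻¹), ← div_div,
            div_eq_mul_inv (u / A), mul_comm]

lemma append_pos {p m : ℕ} {x y : ℝ} (hx : 0 < x) (hy : 0 < y) {b : Fin p → ℝ}
    (hb : ∀ j, 0 < b j) {d : Fin m → ℝ} (hd : ∀ i, 0 < d i) :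
    ∀ j, 0 < Fin.append (Fin.cons x (Fin.cons y d)) b j := by
  have hcons : ∀ {k : ℕ} (z : ℝ) (f : Fin k → ℝ), 0 < z → (∀ i, 0 < f i) →
      ∀ i, 0 < (Fin.cons z f : Fin (k+1) → ℝ) i := fun z f hz hf i => Fin.cases hz hf i
  intro j
  refine Fin.addCases (fun i => ?_) (fun i => ?_) j
  · rw [Fin.append_left]
    exact hcons _ _ hx (hcons _ _ hy hd) i
  · rw [Fin.append_right]
    exact hb i

/-! ### Spectral auxiliary lemmas -/

lemma hasEigenvalue_eigenvalues {ι : Type*} [Fintype ι] [DecidableEq ι] (Q : Matrix ι ι ℝ)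
    (hQ : Q.IsHermitian) (i : ι) :
    Module.End.HasEigenvalue (Matrix.toLin' Q) (hQ.eigenvalues i) := by
  have hv := hQ.mulVec_eigenvectorBasis i
  refine Module.End.hasEigenvalue_of_hasEigenvector (x := ⇑(hQ.eigenvectorBasis i)) ⟨?_, ?_⟩
  · rw [Module.End.mem_eigenspace_iff, Matrix.toLin'_apply, hv]
  · intro h
    refine hQ.eigenvectorBasis.orthonormal.ne_zero i ?_
    ext j
    exact congrFun h j

lemma pow_spectral {ι : Type*} [Fintype ι] [DecidableEq ι] (Q : Matrix ι ι ℝ)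
    (hQ : Q.IsHermitian) (n : ℕ) :
    Q ^ (n + 1) = (hQ.eigenvectorUnitary : Matrix ι ι ℝ) *
      diagonal (fun i => hQ.eigenvalues i ^ (n + 1)) *
      star (hQ.eigenvectorUnitary : Matrix ι ι ℝ) := by
  set V := (hQ.eigenvectorUnitary : Matrix ι ι ℝ) with hV
  set ev := hQ.eigenvalues with hev
  have hsU : star V * V = 1 := Unitary.coe_star_mul_self _
  have base : Q = V * diagonal ev * star V := by
    simpa [RCLike.ofReal_real_eq_id, Function.comp_def] using hQ.spectral_theorem
  have key : ∀ d1 d2 : ι → ℝ,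
      (V * diagonal d1 * star V) * (V * diagonal d2 * star V)
        = V * diagonal (fun i => d1 i * d2 i) * star V := by
    intro d1 d2
    calc (V * diagonal d1 * star V) * (V * diagonal d2 * star V)
        = V * (diagonal d1 * ((star V * V) * (diagonal d2 * star V))) := by
          simp only [Matrix.mul_assoc]
      _ = V * (diagonal d1 * diagonal d2) * star V := by
          rw [hsU, Matrix.one_mul]; simp only [Matrix.mul_assoc]
      _ = V * diagonal (fun i => d1 i * d2 i) * star V := by
          rw [Matrix.diagonal_mul_diagonal]
  induction n with
  | zero =>
    simpa [pow_one] using base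
  | succ n ih =>
    have h2 : Q ^ (n + 1 + 1) = Q ^ (n + 1) * Q := pow_succ Q (n + 1)
    rw [h2, ih, base, key]
    congr 2

lemma pow_entry_bound {ι : Type*} [Fintype ι] [DecidableEq ι] (Q : Matrix ι ι ℝ)
    (hQ : Q.IsHermitian) (r : ℝ) (hr : ∀ i, |hQ.eigenvalues i| ≤ r) (n : ℕ) (I J : ι) :
    |(Q ^ (n + 1)) I J| ≤ Fintype.card ι * r ^ (n + 1) := by
  rw [pow_spectral Q hQ n]
  set V := (hQ.eigenvectorUnitary : Matrix ι ι ℝ) with hV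
  have hVle : ∀ i k, |V i k| ≤ 1 := by
    intro i k
    have h1 : (star V * V) k k = 1 := by
      rw [Unitary.coe_star_mul_self]
      simp [Matrix.one_apply]
    rw [Matrix.mul_apply] at h1
    simp only [Matrix.star_apply, star_trivial] at h1
    rw [abs_le_one_iff_mul_self_le_one]
    calc V i k * V i k ≤ ∑ j, V j k * V j k :=
          Finset.single_le_sum (f := fun j => V j k * V j k)
            (fun j _ => mul_self_nonneg _) (Finset.mem_univ i)
      _ = 1 := h1
  rw [Matrix.mul_apply]
  simp only [Matrix.mul_diagonal, Matrix.star_apply, star_trivial]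
  refine le_trans (Finset.abs_sum_le_sum_abs _ _) ?_
  have hcard : ∑ _k : ι, r ^ (n + 1) = Fintype.card ι * r ^ (n + 1) := by
    rw [Finset.sum_const, Finset.card_univ, nsmul_eq_mul]
  rw [← hcard]
  refine Finset.sum_le_sum fun k _ => ?_
  rw [abs_mul, abs_mul, abs_pow]
  have h2 : |hQ.eigenvalues k| ^ (n + 1) ≤ r ^ (n + 1) :=
    pow_le_pow_left₀ (abs_nonneg _) (hr k) _
  have h3 : |V I k| ≤ 1 := hVle I k
  have h4 : |V J k| ≤ 1 := hVle J k
  have h5 : (0:ℝ) ≤ |V I k| := abs_nonneg _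
  have h6 : (0:ℝ) ≤ |V J k| := abs_nonneg _
  have h7 : (0:ℝ) ≤ |hQ.eigenvalues k| ^ (n + 1) := pow_nonneg (abs_nonneg _) _
  have h8 : (0:ℝ) ≤ r ^ (n + 1) := le_trans h7 h2
  have h9 : (0:ℝ) ≤ 1 * r ^ (n + 1) := by linarith
  have h10 := mul_le_mul (mul_le_mul h3 h2 h7 zero_le_one) h4 h6 h9
  linarith

/-- **Convergence criterion for the flavour expansion of one-loop integrals.** -/
theorem flavourExpansion_convergence {ι : Type*} [Fintype ι] [DecidableEq ι]
    (D : ι → ℝ) (hD : ∀ i, 0 < D i)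
    (Ahat : Matrix ι ι ℂ) (hH : Ahat.IsHermitian) (hdiag : ∀ i, Ahat i i = 0)
    (p : ℕ) (hp : 2 ≤ p) (b : Fin p → ℝ) (hb : ∀ j, 0 < b j)
    (hQ : ∀ μ : ℝ, Module.End.HasEigenvalue
        (Matrix.toLin'
          (Matrix.of fun i j => ‖Ahat i j‖ / Real.sqrt (D i * D j))) μ →
      |μ| < 1)
    (I J : ι) :
    Summable (fun m : ℕ =>
      ∑ K : Fin m → ι,
        Jint (Fin.append (Fin.cons (D I) (Fin.cons (D J) (fun i => D (K i)))) b) *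
          pathProd (Matrix.of fun i j => ‖Ahat i j‖) I J K) := by
  classical
  haveI : Nonempty ι := ⟨I⟩
  set absA := (Matrix.of fun i j => ‖Ahat i j‖) with habsA
  set Qmat := (Matrix.of fun i j => ‖Ahat i j‖ / Real.sqrt (D i * D j)) with hQmat
  have habs_nonneg : ∀ i j, 0 ≤ absA i j := fun i j => by
    simp only [habsA, Matrix.of_apply]
    exact norm_nonneg _
  have habs_symm : ∀ i j, ‖Ahat j i‖ = ‖Ahat i j‖ := by
    intro i j
    rw [← hH.apply i j]
    exact (Complex.norm_conj _).symm
  -- Q is symmetric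
  have hQH : Qmat.IsHermitian := by
    unfold Matrix.IsHermitian
    ext i j
    simp only [hQmat, Matrix.conjTranspose_apply, Matrix.of_apply, star_trivial]
    rw [habs_symm i j, mul_comm (D j)]
  -- eigenvalue bound
  have heig : ∀ i, |hQH.eigenvalues i| < 1 := fun i =>
    hQ _ (hasEigenvalue_eigenvalues Qmat hQH i)
  set r := Finset.univ.sup' Finset.univ_nonempty (fun i => |hQH.eigenvalues i|) with hrdef
  have hr : ∀ i, |hQH.eigenvalues i| ≤ r := fun i =>
    Finset.le_sup' (fun i => |hQH.eigenvalues i|) (Finset.mem_univ i)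
  have hr1 : r < 1 := (Finset.sup'_lt_iff _).mpr fun i _ => heig i
  have hr0 : 0 ≤ r := le_trans (abs_nonneg _) (hr I)
  -- the constant C0
  set C0 := ∫ u in Set.Ioi (0:ℝ),
      u / ((u + D I) * ((u + D J) * ∏ j, (u + b j))) with hC0
  have hC0nonneg : 0 ≤ C0 := by
    refine MeasureTheory.setIntegral_nonneg measurableSet_Ioi fun u hu => ?_
    have h0 : (0:ℝ) < u := hu
    have h1 : (0:ℝ) ≤ ∏ j, (u + b j) :=
      Finset.prod_nonneg fun j _ => by linarith [hb j]
    have h3 : (0:ℝ) ≤ u + D I := by linarith [hD I]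
    have h4 : (0:ℝ) ≤ u + D J := by linarith [hD J]
    positivity
  -- the scaling function
  set g : ι → ℝ := fun i => (Real.sqrt (D i))⁻¹ with hg
  have hsq : ∀ i, 0 < Real.sqrt (D i) := fun i => Real.sqrt_pos.mpr (hD i)
  have hQeq : Qmat = Matrix.of fun i j => g i * absA i j * g j := by
    ext i j
    simp only [hQmat, habsA, hg, Matrix.of_apply]
    rw [Real.sqrt_mul (hD i).le, div_eq_mul_inv, mul_inv]
    ring
  -- key identity
  have key : ∀ (m : ℕ) (K : Fin m → ι),
      Real.sqrt (D I) * Real.sqrt (D J) * pathProd Qmat I J K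
        = (∏ i, (D (K i))⁻¹) * pathProd absA I J K := by
    intro m K
    rw [hQeq, pathProd_scale]
    have hprod : ∏ i, (g (K i) * g (K i)) = ∏ i, (D (K i))⁻¹ := by
      refine Finset.prod_congr rfl fun i _ => ?_
      rw [hg, ← mul_inv, Real.mul_self_sqrt (hD (K i)).le]
    rw [hprod]
    have hgi : Real.sqrt (D I) * g I = 1 := mul_inv_cancel₀ (hsq I).ne'
    have hgj : Real.sqrt (D J) * g J = 1 := mul_inv_cancel₀ (hsq J).ne'
    calc Real.sqrt (D I) * Real.sqrt (D J) *
          ((g I * g J * ∏ i, (D (K i))⁻¹) * pathProd absA I J K)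
        = (Real.sqrt (D I) * g I) * (Real.sqrt (D J) * g J) *
            ((∏ i, (D (K i))⁻¹) * pathProd absA I J K) := by ring
      _ = (∏ i, (D (K i))⁻¹) * pathProd absA I J K := by rw [hgi, hgj, one_mul, one_mul]
  -- geometric bound for each term
  set Cbig := C0 * (Real.sqrt (D I) * Real.sqrt (D J)) * Fintype.card ι * r with hCbig
  have hle : ∀ m : ℕ,
      ∑ K : Fin m → ι,
        Jint (Fin.append (Fin.cons (D I) (Fin.cons (D J) (fun i => D (K i)))) b) *
          pathProd absA I J K ≤ Cbig * r ^ m := by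
    intro m
    have hQpow : (Qmat ^ (m + 1)) I J ≤ Fintype.card ι * r ^ (m + 1) :=
      le_trans (le_abs_self _) (pow_entry_bound Qmat hQH r hr m I J)
    calc ∑ K : Fin m → ι,
          Jint (Fin.append (Fin.cons (D I) (Fin.cons (D J) (fun i => D (K i)))) b) *
            pathProd absA I J K
        ≤ ∑ K : Fin m → ι, ((∏ i, (D (K i))⁻¹) * C0) * pathProd absA I J K := by
          refine Finset.sum_le_sum fun K _ => ?_
          refine mul_le_mul_of_nonneg_right ?_ (pathProd_nonneg absA habs_nonneg I J K)
          exact Jint_le (D I) (D J) (hD I) (hD J) hp b hb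
            (fun i => D (K i)) (fun i => hD (K i))
      _ = C0 * ∑ K : Fin m → ι, (∏ i, (D (K i))⁻¹) * pathProd absA I J K := by
          rw [Finset.mul_sum]
          exact Finset.sum_congr rfl fun K _ => by ring
      _ = C0 * (Real.sqrt (D I) * Real.sqrt (D J) * ∑ K : Fin m → ι, pathProd Qmat I J K) := by
          congr 1
          rw [Finset.mul_sum]
          exact Finset.sum_congr rfl fun K _ => (key m K).symm
      _ = C0 * (Real.sqrt (D I) * Real.sqrt (D J) * (Qmat ^ (m + 1)) I J) := by
          rw [sum_pathProd]
      _ ≤ C0 * (Real.sqrt (D I) * Real.sqrt (D J) * (Fintype.card ι * r ^ (m + 1))) := by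
          have hsqIJ : (0:ℝ) ≤ Real.sqrt (D I) * Real.sqrt (D J) :=
            mul_nonneg (hsq I).le (hsq J).le
          exact mul_le_mul_of_nonneg_left
            (mul_le_mul_of_nonneg_left hQpow hsqIJ) hC0nonneg
      _ = Cbig * r ^ m := by rw [hCbig, pow_succ]; ring
  have hnonneg : ∀ m : ℕ, 0 ≤
      ∑ K : Fin m → ι,
        Jint (Fin.append (Fin.cons (D I) (Fin.cons (D J) (fun i => D (K i)))) b) *
          pathProd absA I J K := by
    intro m
    refine Finset.sum_nonneg fun K _ => mul_nonneg ?_ (pathProd_nonneg absA habs_nonneg I J K)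
    exact Jint_nonneg _ (append_pos (hD I) (hD J) hb (fun i => hD (K i)))
  exact Summable.of_nonneg_of_le hnonneg hle
    ((summable_geometric_of_lt_one hr0 hr1).mul_left Cbig)
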